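/- Let (X,d) be a possibly non-symmetric metric space with base-point b, satisfying: the symmetrised metric d̂(x,y) = d(x,y)+d(y,x) is proper (closed balls compact), any two points are joined by a geodesic for d, and d(x_n,x) → 0 iff d(x,x_n) → 0 for sequences. If a sequence (x_n) in X is such that φ_{x_n} converges pointwise to a function ξ that is not of the form φ_y for any y ∈ X, then d̂(b,x_n) → ∞; i.e., only finitely many x_n lie in any closed d̂-ball. -/

import Mathlib

/-- in a possibly non-symmetric metric space whose symmetrised metric
`d̂` is proper, in which geodesics for `d` exist, and in which `d(x_n,x) → 0` iff
`d(x,x_n) → 0`, any sequence `x n` with `φ_{x n}` converging pointwise to a function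
not of the form `φ_y` must escape to infinity: `d̂ (b, x n) → ∞`. -/
theorem escapes_to_infinity_of_horofunction_limit {X : Type*} [MetricSpace X]
    (d : X → X → ℝ) (b : X)
    (hpos : ∀ x y, 0 ≤ d x y) (hzero : ∀ x y, d x y = 0 ↔ x = y)
    (htri : ∀ x y z, d x z ≤ d x y + d y z)
    (hdist : ∀ x y : X, dist x y = d x y + d y x)
    (hproper : ProperSpace X)
    (hgeo : ∀ x y : X, ∃ γ : ℝ → X, γ 0 = x ∧ γ (d x y) = y ∧
      ∀ s t : ℝ, 0 ≤ s → s ≤ t → t ≤ d x y → d (γ s) (γ t) = t - s)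
    (htop : ∀ (x : X) (u : ℕ → X),
      Filter.Tendsto (fun n => d (u n) x) Filter.atTop (nhds 0) ↔
        Filter.Tendsto (fun n => d x (u n)) Filter.atTop (nhds 0))
    (x : ℕ → X) (ξ : X → ℝ)
    (hξ : ∀ w, Filter.Tendsto (fun n => d w (x n) - d b (x n)) Filter.atTop
      (nhds (ξ w)))
    (hnot : ¬ ∃ y : X, ξ = fun w => d w y - d b y) :
    Filter.Tendsto (fun n => dist b (x n)) Filter.atTop Filter.atTop := by
  by_contra hT
  rw [Filter.tendsto_atTop] at hT
  push_neg at hT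
  obtain ⟨R, hR⟩ := hT
  simp only [← not_le] at hR
  obtain ⟨φ, hφmono, hφ⟩ := Filter.extraction_of_frequently_atTop hR
  have hmem : ∀ k, x (φ k) ∈ Metric.closedBall b R := fun k => by
    have := not_le.mp (hφ k)
    simp only [Metric.mem_closedBall, dist_comm]
    linarith
  obtain ⟨y, _, ψ, hψmono, hconv⟩ := (isCompact_closedBall b R).tendsto_subseq hmem
  apply hnot
  refine ⟨y, funext fun w => ?_⟩
  have hsub : Filter.Tendsto (fun k => d w (x (φ (ψ k))) - d b (x (φ (ψ k))))
      Filter.atTop (nhds (ξ w)) := (hξ w).comp ((hφmono.comp hψmono).tendsto_atTop)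
  have hdist0 : Filter.Tendsto (fun k => dist (x (φ (ψ k))) y) Filter.atTop (nhds 0) := by
    have := tendsto_iff_dist_tendsto_zero.mp hconv
    simpa [Function.comp] using this
  have hdw : ∀ v : X, Filter.Tendsto (fun k => d v (x (φ (ψ k)))) Filter.atTop
      (nhds (d v y)) := by
    intro v
    have h0 : Filter.Tendsto (fun k => d v (x (φ (ψ k))) - d v y) Filter.atTop (nhds 0) := by
      apply squeeze_zero_norm (fun k => ?_) hdist0
      have h1 := htri v (x (φ (ψ k))) y
      have h2 := htri v y (x (φ (ψ k)))
      have h3 := hdist (x (φ (ψ k))) y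
      have h4 := hpos (x (φ (ψ k))) y
      have h5 := hpos y (x (φ (ψ k)))
      rw [Real.norm_eq_abs, abs_le]
      constructor <;> linarith
    have := h0.add_const (d v y)
    simpa using this
  exact tendsto_nhds_unique hsub ((hdw w).sub (hdw b))
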